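/- The greedy algorithm for maximum coverage achieves an approximation ratio of 1 − (1 − 1/k)^k ≥ 1 − 1/e: given a finite collection of finite sets and a budget k, iteratively selecting the set covering the most uncovered elements covers at least (1 − (1−1/k)^k) times the number of elements covered by an optimal choice of k sets. -/

import Mathlib

open Finset

/-- Greedy approximation for maximum coverage: if at each of `k` steps one picks
a set from the family `F` covering the most yet-uncovered elements, then the
number of covered elements is at least `(1 - (1 - 1/k)^k)` times the optimum,
and `1 - (1 - 1/k)^k ≥ 1 - 1/e`. -/
theorem greedy_max_coverage {α : Type*} [DecidableEq α]
    (F : Finset (Finset α)) (k : ℕ) (hk : 1 ≤ k)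
    (S : Fin k → Finset α) (hS : ∀ j, S j ∈ F)
    (hgreedy : ∀ j : Fin k, ∀ T ∈ F,
      (T \ ((Finset.univ.filter fun i : Fin k => i < j).biUnion S)).card ≤
      (S j \ ((Finset.univ.filter fun i : Fin k => i < j).biUnion S)).card) :
    (∀ T : Fin k → Finset α, (∀ j, T j ∈ F) →
      (1 - (1 - 1 / (k : ℝ)) ^ k) * ((Finset.univ.biUnion T).card : ℝ) ≤
        ((Finset.univ.biUnion S).card : ℝ)) ∧
    1 - 1 / Real.exp 1 ≤ 1 - (1 - 1 / (k : ℝ)) ^ k := by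
  classical
  have hkpos : (0:ℝ) < k := by
    have : (1:ℝ) ≤ k := by exact_mod_cast hk
    linarith
  have hfac : (0:ℝ) ≤ 1 - 1/(k:ℝ) := by
    rw [sub_nonneg, div_le_one hkpos]
    exact_mod_cast hk
  constructor
  · intro T hT
    set Opt : ℝ := ((Finset.univ.biUnion T).card : ℝ) with hOpt
    set C : ℕ → Finset α :=
      fun n => (Finset.univ.filter fun i : Fin k => (i:ℕ) < n).biUnion S with hCdef
    have hg : ∀ (j : Fin k), ∀ T' ∈ F,
        (T' \ C (j:ℕ)).card ≤ (S j \ C (j:ℕ)).card := by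
      intro j T' hT'
      have hfilt : (Finset.univ.filter fun i : Fin k => i < j) =
          (Finset.univ.filter fun i : Fin k => (i:ℕ) < (j:ℕ)) := by
        apply Finset.filter_congr
        intro i _
        exact Fin.lt_def
      have := hgreedy j T' hT'
      rwa [hfilt] at this
    have hstep : ∀ n (hn : n < k), C (n+1) = C n ∪ S ⟨n, hn⟩ := by
      intro n hn
      ext x
      simp only [hCdef, Finset.mem_biUnion, Finset.mem_filter, Finset.mem_union,
        Finset.mem_univ, true_and]
      constructor
      · rintro ⟨i, hi, hx⟩
        rcases Nat.lt_succ_iff_lt_or_eq.mp hi with h | h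
        · exact Or.inl ⟨i, h, hx⟩
        · right
          have : i = ⟨n, hn⟩ := Fin.ext h
          rwa [this] at hx
      · rintro (⟨i, hi, hx⟩ | hx)
        · exact ⟨i, Nat.lt_succ_of_lt hi, hx⟩
        · exact ⟨⟨n, hn⟩, Nat.lt_succ_self n, hx⟩
    have hcard : ∀ n (hn : n < k),
        (C (n+1)).card = (C n).card + (S ⟨n, hn⟩ \ C n).card := by
      intro n hn
      rw [hstep n hn, Finset.union_comm, ← Finset.card_sdiff_add_card, Nat.add_comm]
    have hbound : ∀ n (hn : n < k),
        (Finset.univ.biUnion T).card ≤ (C n).card + k * (S ⟨n, hn⟩ \ C n).card := by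
      intro n hn
      have hsub : Finset.univ.biUnion T ⊆
          C n ∪ Finset.univ.biUnion (fun i : Fin k => T i \ C n) := by
        intro x hx
        simp only [Finset.mem_biUnion, Finset.mem_union, Finset.mem_univ, true_and,
          Finset.mem_sdiff] at hx ⊢
        obtain ⟨i, hx⟩ := hx
        by_cases h : x ∈ C n
        · exact Or.inl h
        · exact Or.inr ⟨i, hx, h⟩
      calc (Finset.univ.biUnion T).card
          ≤ (C n ∪ Finset.univ.biUnion (fun i : Fin k => T i \ C n)).card :=
            Finset.card_le_card hsub
        _ ≤ (C n).card + (Finset.univ.biUnion (fun i : Fin k => T i \ C n)).card :=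
            Finset.card_union_le _ _
        _ ≤ (C n).card + ∑ i : Fin k, (T i \ C n).card := by
            gcongr
            exact Finset.card_biUnion_le
        _ ≤ (C n).card + ∑ _i : Fin k, (S ⟨n, hn⟩ \ C n).card := by
            refine Nat.add_le_add_left (Finset.sum_le_sum ?_) _
            intro i _
            exact hg ⟨n, hn⟩ (T i) (hT i)
        _ = (C n).card + k * (S ⟨n, hn⟩ \ C n).card := by
            simp [Finset.sum_const, Finset.card_univ, Fintype.card_fin]
    have main : ∀ n, n ≤ k → (Opt - ((C n).card : ℝ)) ≤ (1 - 1/(k:ℝ))^n * Opt := by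
      intro n
      induction n with
      | zero =>
        intro _
        have : C 0 = ∅ := by
          simp [hCdef]
        simp [this]
      | succ n ih =>
        intro hn1
        have hn : n < k := hn1
        have ihh := ih (le_of_lt hn)
        have hOptnn : (0:ℝ) ≤ Opt := Nat.cast_nonneg _
        have h1' : Opt ≤ ((C n).card : ℝ) + (k:ℝ) * ((S ⟨n, hn⟩ \ C n).card : ℝ) := by
          have := hbound n hn
          rw [hOpt]
          exact_mod_cast this
        have h2' : ((C (n+1)).card : ℝ) =
            ((C n).card : ℝ) + ((S ⟨n, hn⟩ \ C n).card : ℝ) := by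
          exact_mod_cast hcard n hn
        have key : Opt - ((C (n+1)).card : ℝ) ≤ (1 - 1/(k:ℝ)) * (Opt - (C n).card) := by
          rw [h2']
          have hdiv : (Opt - ((C n).card : ℝ))/(k:ℝ) ≤ ((S ⟨n, hn⟩ \ C n).card : ℝ) := by
            rw [div_le_iff₀ hkpos]
            nlinarith
          have expand : (1 - 1/(k:ℝ)) * (Opt - ((C n).card : ℝ)) =
              (Opt - ((C n).card : ℝ)) - (Opt - ((C n).card : ℝ))/(k:ℝ) := by
            field_simp
          linarith
        calc Opt - ((C (n+1)).card : ℝ)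
            ≤ (1 - 1/(k:ℝ)) * (Opt - (C n).card) := key
          _ ≤ (1 - 1/(k:ℝ)) * ((1 - 1/(k:ℝ))^n * Opt) := by
              exact mul_le_mul_of_nonneg_left ihh hfac
          _ = (1 - 1/(k:ℝ))^(n+1) * Opt := by ring
    have hCk : C k = Finset.univ.biUnion S := by
      ext x
      simp only [hCdef, Finset.mem_biUnion, Finset.mem_filter, Finset.mem_univ, true_and,
        Fin.is_lt]
    have hfinal := main k le_rfl
    rw [hCk] at hfinal
    nlinarith [hfinal]
  · have h2 : 1 - 1/(k:ℝ) ≤ Real.exp (-(1/(k:ℝ))) := by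
      have := Real.add_one_le_exp (-(1/(k:ℝ)))
      linarith
    have h3 : (1 - 1/(k:ℝ))^k ≤ Real.exp (-(1/(k:ℝ)))^k :=
      pow_le_pow_left₀ hfac h2 k
    have h4 : Real.exp (-(1/(k:ℝ)))^k = Real.exp (-1) := by
      rw [← Real.exp_nat_mul]
      congr 1
      field_simp
    have h5 : Real.exp (-1) = 1 / Real.exp 1 := by
      rw [Real.exp_neg]
      simp
    rw [h4, h5] at h3
    linarith
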